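/- For any fixed real vector a = (a₁,…,aₙ), the Gaussian integral of the shifted Vandermonde determinant satisfies ∫_{ℝⁿ} e^{−Σᵢ yᵢ²} Δ(y + a) dy = π^{n/2} Δ(a), where Δ(x) = ∏_{i<j}(xᵢ − xⱼ). -/

import Mathlib

open MeasureTheory Real Finset Matrix Polynomial

/-- The Vandermonde determinant `∏_{i<j} (x i - x j)`. -/
noncomputable def vandermondeProd (n : ℕ) (x : Fin n → ℝ) : ℝ :=
  ∏ p ∈ Finset.univ.filter (fun p : Fin n × Fin n => p.1 < p.2), (x p.1 - x p.2)

/-- moments of the gaussian -/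
noncomputable def gaussMoment (r : ℕ) : ℝ := ∫ t : ℝ, t ^ r * Real.exp (-t ^ 2)

lemma integrable_pow_gauss (r : ℕ) :
    Integrable (fun t : ℝ => t ^ r * Real.exp (-t ^ 2)) := by
  have h : (-1 : ℝ) < (r : ℝ) :=
    lt_of_lt_of_le neg_one_lt_zero (Nat.cast_nonneg r)
  have := integrable_rpow_mul_exp_neg_mul_sq (b := 1) one_pos h
  simpa [Real.rpow_natCast] using this

lemma gaussMoment_zero : gaussMoment 0 = Real.sqrt π := by
  have := integral_gaussian (1 : ℝ)
  simpa [gaussMoment] using this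

lemma integrable_shift_pow_gauss (c : ℝ) (k : ℕ) :
    Integrable (fun t : ℝ => Real.exp (-t ^ 2) * (t + c) ^ k) := by
  have heq : (fun t : ℝ => Real.exp (-t ^ 2) * (t + c) ^ k)
      = fun t => ∑ j ∈ Finset.range (k + 1),
          (c ^ (k - j) * (k.choose j : ℝ)) * (t ^ j * Real.exp (-t ^ 2)) := by
    funext t
    rw [add_pow, Finset.mul_sum]
    refine Finset.sum_congr rfl fun j _ => by ring
  rw [heq]
  exact integrable_finset_sum _ fun j _ => (integrable_pow_gauss j).const_mul _

lemma gauss_shift_eval (c : ℝ) (k : ℕ) :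
    (∫ t : ℝ, Real.exp (-t ^ 2) * (t + c) ^ k)
      = ∑ j ∈ Finset.range (k + 1),
          (c ^ (k - j) * (k.choose j : ℝ)) * gaussMoment j := by
  have heq : (fun t : ℝ => Real.exp (-t ^ 2) * (t + c) ^ k)
      = fun t => ∑ j ∈ Finset.range (k + 1),
          (c ^ (k - j) * (k.choose j : ℝ)) * (t ^ j * Real.exp (-t ^ 2)) := by
    funext t
    rw [add_pow, Finset.mul_sum]
    refine Finset.sum_congr rfl fun j _ => by ring
  rw [heq, integral_finset_sum _ fun j _ => (integrable_pow_gauss j).const_mul _]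
  refine Finset.sum_congr rfl fun j _ => ?_
  rw [MeasureTheory.integral_const_mul]; rfl
noncomputable def hermLike (k : ℕ) : ℝ[X] :=
  ∑ j ∈ Finset.range (k + 1),
    Polynomial.C ((k.choose j : ℝ) * gaussMoment j / Real.sqrt π) * Polynomial.X ^ (k - j)

lemma sqrt_pi_ne_zero : Real.sqrt π ≠ 0 :=
  ne_of_gt (Real.sqrt_pos.mpr Real.pi_pos)

lemma hermLike_coeff_top (k : ℕ) : (hermLike k).coeff k = 1 := by
  rw [hermLike, Polynomial.finset_sum_coeff]
  rw [Finset.sum_eq_single 0]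
  · simp [Polynomial.coeff_C_mul, Polynomial.coeff_X_pow, gaussMoment_zero,
      div_self sqrt_pi_ne_zero]
  · intro j hj hj0
    have hjk : j ≤ k := Nat.lt_succ_iff.mp (Finset.mem_range.mp hj)
    have : k - j ≠ k := by
      have hk : 0 < k := lt_of_lt_of_le (Nat.pos_of_ne_zero hj0) hjk
      exact ne_of_lt (Nat.sub_lt hk (Nat.pos_of_ne_zero hj0))
    simp [Polynomial.coeff_C_mul, Polynomial.coeff_X_pow, this.symm]
  · intro h
    exact absurd (Finset.mem_range.mpr (Nat.succ_pos k)) h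

lemma hermLike_natDegree_le (k : ℕ) : (hermLike k).natDegree ≤ k := by
  refine Polynomial.natDegree_sum_le_of_forall_le _ _ fun j hj => ?_
  refine le_trans (Polynomial.natDegree_mul_le) ?_
  simp [Polynomial.natDegree_X_pow]

lemma hermLike_monic (k : ℕ) : (hermLike k).Monic :=
  Polynomial.monic_of_natDegree_le_of_coeff_eq_one k (hermLike_natDegree_le k)
    (hermLike_coeff_top k)

lemma hermLike_natDegree (k : ℕ) : (hermLike k).natDegree = k :=
  le_antisymm (hermLike_natDegree_le k)
    (Polynomial.le_natDegree_of_ne_zero (by rw [hermLike_coeff_top]; exact one_ne_zero))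

lemma sqrtpi_mul_eval (k : ℕ) (c : ℝ) :
    Real.sqrt π * (hermLike k).eval c = ∫ t : ℝ, Real.exp (-t ^ 2) * (t + c) ^ k := by
  rw [gauss_shift_eval, hermLike]
  rw [Polynomial.eval_finset_sum, Finset.mul_sum]
  refine Finset.sum_congr rfl fun j _ => ?_
  simp only [Polynomial.eval_mul, Polynomial.eval_C, Polynomial.eval_pow, Polynomial.eval_X]
  field_simp
lemma key_det (n : ℕ) (a : Fin n → ℝ) :
    (∫ y : Fin n → ℝ, Real.exp (-∑ i, (y i) ^ 2) *
        (Matrix.vandermonde fun i => y i + a i).det)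
      = Real.sqrt π ^ n * (Matrix.vandermonde a).det := by
  have hpt : ∀ y : Fin n → ℝ,
      Real.exp (-∑ i, (y i) ^ 2) * (Matrix.vandermonde fun i => y i + a i).det
        = ∑ σ : Equiv.Perm (Fin n), ((Equiv.Perm.sign σ : ℤ) : ℝ) *
            ∏ i, (Real.exp (-(y i) ^ 2) * (y i + a i) ^ ((σ i : Fin n) : ℕ)) := by
    intro y
    have hdet : (Matrix.vandermonde fun i => y i + a i).det
        = ∑ σ : Equiv.Perm (Fin n), ((Equiv.Perm.sign σ : ℤ) : ℝ) *
            ∏ i, (y i + a i) ^ ((σ i : Fin n) : ℕ) := by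
      rw [← Matrix.det_transpose, Matrix.det_apply']
      rfl
    have hexp : Real.exp (-∑ i, (y i) ^ 2) = ∏ i, Real.exp (-(y i) ^ 2) := by
      rw [← Finset.sum_neg_distrib, Real.exp_sum]
    rw [hdet, Finset.mul_sum]
    refine Finset.sum_congr rfl fun σ _ => ?_
    rw [hexp, Finset.prod_mul_distrib]
    ring
  have hint : ∀ σ : Equiv.Perm (Fin n),
      Integrable (fun y : Fin n → ℝ =>
        ∏ i, (Real.exp (-(y i) ^ 2) * (y i + a i) ^ ((σ i : Fin n) : ℕ))) :=
    fun σ => Integrable.fintype_prod fun i => integrable_shift_pow_gauss (a i) ((σ i : Fin n) : ℕ)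
  calc
    (∫ y : Fin n → ℝ, Real.exp (-∑ i, (y i) ^ 2) *
        (Matrix.vandermonde fun i => y i + a i).det)
      = ∫ y : Fin n → ℝ, ∑ σ : Equiv.Perm (Fin n), ((Equiv.Perm.sign σ : ℤ) : ℝ) *
          ∏ i, (Real.exp (-(y i) ^ 2) * (y i + a i) ^ ((σ i : Fin n) : ℕ)) := by
        exact integral_congr_ae (Filter.Eventually.of_forall hpt)
    _ = ∑ σ : Equiv.Perm (Fin n), ((Equiv.Perm.sign σ : ℤ) : ℝ) *
          ∏ i, (∫ t : ℝ, Real.exp (-t ^ 2) * (t + a i) ^ ((σ i : Fin n) : ℕ)) := by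
        rw [integral_finset_sum _ fun σ _ => (hint σ).const_mul _]
        refine Finset.sum_congr rfl fun σ _ => ?_
        rw [MeasureTheory.integral_const_mul,
          MeasureTheory.integral_fintype_prod_volume_eq_prod
            (f := fun i t => Real.exp (-t ^ 2) * (t + a i) ^ ((σ i : Fin n) : ℕ))]
    _ = ∑ σ : Equiv.Perm (Fin n), ((Equiv.Perm.sign σ : ℤ) : ℝ) *
          ∏ i, (Matrix.of fun i j : Fin n =>
            Real.sqrt π * (hermLike (j : ℕ)).eval (a i)) i (σ i) := by
        refine Finset.sum_congr rfl fun σ _ => ?_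
        congr 1
        exact Finset.prod_congr rfl fun i _ => (sqrtpi_mul_eval _ _).symm
    _ = (Matrix.of fun i j : Fin n =>
            Real.sqrt π * (hermLike (j : ℕ)).eval (a i)).det := by
        rw [← Matrix.det_transpose, Matrix.det_apply']
        rfl
    _ = Real.sqrt π ^ n * (Matrix.vandermonde a).det := by
        have hN : (Matrix.of fun i j : Fin n =>
            Real.sqrt π * (hermLike (j : ℕ)).eval (a i))
            = Real.sqrt π • (Matrix.of fun i j : Fin n => (hermLike (j : ℕ)).eval (a i)) := by
          ext i j
          simp
        rw [hN, Matrix.det_smul, Fintype.card_fin]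
        congr 1
        exact (Matrix.det_eval_matrixOfPolynomials_eq_det_vandermonde a
          (fun j => hermLike (j : ℕ)) (fun i => hermLike_natDegree _)
          (fun i => hermLike_monic _)).symm
lemma prod_filter_lt_eq {n : ℕ} (f : Fin n → Fin n → ℝ) :
    (∏ p ∈ Finset.univ.filter (fun p : Fin n × Fin n => p.1 < p.2), f p.1 p.2)
      = ∏ i, ∏ j ∈ Finset.Ioi i, f i j := by
  rw [Finset.prod_sigma']
  refine Finset.prod_bij' (fun p _ => (⟨p.1, p.2⟩ : (_ : Fin n) × Fin n))
    (fun p _ => (p.1, p.2)) ?_ ?_ ?_ ?_ ?_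
  · rintro ⟨i, j⟩ h
    simp only [Finset.mem_filter, Finset.mem_univ, true_and] at h
    simp [Finset.mem_Ioi, h]
  · rintro ⟨i, j⟩ h
    simp only [Finset.mem_sigma, Finset.mem_univ, Finset.mem_Ioi, true_and] at h
    simp [h]
  · rintro ⟨i, j⟩ _; rfl
  · rintro ⟨i, j⟩ _; rfl
  · rintro ⟨i, j⟩ _; rfl

lemma vandermondeProd_eq (n : ℕ) (x : Fin n → ℝ) :
    vandermondeProd n x
      = (-1 : ℝ) ^ (Finset.univ.filter
            (fun p : Fin n × Fin n => p.1 < p.2)).card *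
          (Matrix.vandermonde x).det := by
  rw [Matrix.det_vandermonde, ← prod_filter_lt_eq (fun i j => x j - x i),
    vandermondeProd, ← Finset.prod_const, ← Finset.prod_mul_distrib]
  refine Finset.prod_congr rfl fun p _ => by ring

theorem gaussian_integral_shifted_vandermonde (n : ℕ) (a : Fin n → ℝ) :
    ∫ y : Fin n → ℝ, Real.exp (-∑ i, (y i) ^ 2) *
        vandermondeProd n (fun i => y i + a i)
      = Real.pi ^ ((n : ℝ) / 2) * vandermondeProd n a := by
  have hsq : Real.pi ^ ((n : ℝ) / 2) = Real.sqrt π ^ n := by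
    rw [Real.sqrt_eq_rpow, ← Real.rpow_natCast (π ^ ((1:ℝ)/2)) n,
      ← Real.rpow_mul Real.pi_pos.le]
    norm_num
    ring_nf
  set c := (Finset.univ.filter (fun p : Fin n × Fin n => p.1 < p.2)).card
  have h1 : ∀ y : Fin n → ℝ,
      Real.exp (-∑ i, (y i) ^ 2) * vandermondeProd n (fun i => y i + a i)
        = (-1 : ℝ) ^ c * (Real.exp (-∑ i, (y i) ^ 2) *
            (Matrix.vandermonde fun i => y i + a i).det) := by
    intro y
    rw [vandermondeProd_eq]
    ring
  calc
    ∫ y : Fin n → ℝ, Real.exp (-∑ i, (y i) ^ 2) *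
        vandermondeProd n (fun i => y i + a i)
      = ∫ y : Fin n → ℝ, (-1 : ℝ) ^ c * (Real.exp (-∑ i, (y i) ^ 2) *
            (Matrix.vandermonde fun i => y i + a i).det) :=
        integral_congr_ae (Filter.Eventually.of_forall h1)
    _ = (-1 : ℝ) ^ c * (Real.sqrt π ^ n * (Matrix.vandermonde a).det) := by
        rw [MeasureTheory.integral_const_mul, key_det]
    _ = Real.pi ^ ((n : ℝ) / 2) * vandermondeProd n a := by
        rw [hsq, vandermondeProd_eq]
        ring
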